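/- Let M be a connected reductive group over an algebraically closed field and let A ⊂ k[M] be the set of regular functions f such that for all m₁, m₂ ∈ M the function t ↦ f(m₁ t m₂) on a fixed maximal torus T_sub lies in the subalgebra R spanned by the characters in a W_M-stable rational cone C̆. Then A is a subalgebra of k[M] closed under the comultiplication of k[M], i.e., the coproduct maps A into A ⊗ A. -/

import Mathlib

/-- The inclusion of the lattice `Λ̌ = ℤⁿ` into the rational vector space `Λ̌ ⊗ ℚ = ℚⁿ`. -/
def latticeToQ (n : ℕ) (v : Fin n → ℤ) : Fin n → ℚ := fun i => (v i : ℚ)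

/-- The convex cone in `ℚⁿ` generated by a set `gens`: the closure of the set of
non-negative rational multiples of elements of `gens` under addition. -/
def coneOf (n : ℕ) (gens : Set (Fin n → ℚ)) : AddSubmonoid (Fin n → ℚ) :=
  AddSubmonoid.closure {x | ∃ q : ℚ, 0 ≤ q ∧ ∃ v ∈ gens, x = q • v}

/-- Linearly independent functions separate points: the evaluation vectors span everything. -/
lemma eval_span_top' {k : Type} [Field k] {M : Type*} {r : ℕ} (u : Fin r → (M → k))
    (hu : LinearIndependent k u) :
    Submodule.span k (Set.range (fun x : M => fun i => u i x)) = ⊤ := by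
  by_contra hne
  obtain ⟨φ, hφ0, hφ⟩ := Submodule.exists_dual_map_eq_bot_of_lt_top
    (lt_top_iff_ne_top.mpr hne) inferInstance
  set c : Fin r → k := fun i => φ (Pi.single i 1) with hc
  have hzero : ∀ v ∈ Submodule.span k (Set.range (fun x : M => fun i => u i x)), φ v = 0 := by
    intro v hv
    have : φ v ∈ Submodule.map φ (Submodule.span k (Set.range (fun x : M => fun i => u i x))) :=
      Submodule.mem_map_of_mem hv
    rw [hφ] at this
    simpa using this
  have hφeq : ∀ v : Fin r → k, φ v = ∑ i, v i * c i := by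
    intro v
    conv_lhs => rw [pi_eq_sum_univ v]
    rw [map_sum]
    simp only [map_smul, smul_eq_mul, hc]
    refine Finset.sum_congr rfl fun i _ => ?_
    congr 1
    congr 1
    funext j
    simp [Pi.single_apply, eq_comm]
  have hcu : ∑ i, c i • u i = 0 := by
    funext x
    have h1 : φ (fun i => u i x) = 0 :=
      hzero _ (Submodule.subset_span ⟨x, rfl⟩)
    rw [hφeq] at h1
    simpa [mul_comm] using h1
  have hc0 : ∀ i, c i = 0 := Fintype.linearIndependent_iff.mp hu c hcu
  apply hφ0
  apply LinearMap.ext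
  intro v
  rw [hφeq]
  simp [hc0]

/-- Let `M` be a connected reductive group over an algebraically
closed field `k` (modelled by its group of points together with its function algebra
`F = k[M] ⊆ Map(M, k)`, a Hopf algebra: the hypothesis `hHopf` says that every
`f ∈ k[M]` has a matrix-coefficient decomposition `f(xy) = ∑ gᵢ(x) hᵢ(y)` with
`gᵢ, hᵢ ∈ k[M]`, i.e. records the comultiplication of `k[M]`).  Let `T_sub ⊆ M` be a
maximal torus, `C̆ ⊆ Λ̌ ⊗ ℚ` a `W_M`-stable convex rational polyhedral cone, `R` the
span of the characters of `T_sub` lying in `C̆ ∩ Λ̌`, and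
`A = { f ∈ k[M] : (t ↦ f(m₁ t m₂)) ∈ R for all m₁, m₂ ∈ M }`.  Then `A` is a
subalgebra of `k[M]` and the coproduct of `k[M]` maps `A` into `A ⊗ A`: every `f ∈ A`
has a decomposition `f(xy) = ∑ gᵢ(x) hᵢ(y)` with `gᵢ, hᵢ ∈ A`. -/
theorem stmt14 (k : Type) [Field k] [IsAlgClosed k]
    (M : Type*) [Group M] (Tsub : Subgroup M)
    (n : ℕ) (gens : Finset (Fin n → ℚ))
    (hlat : ∀ v ∈ gens, ∃ u : Fin n → ℤ, v = latticeToQ n u)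
    (WM : Type*) [Group WM] [Finite WM] [DistribMulAction WM (Fin n → ℤ)]
    (hstable : ∀ (w : WM) (x : Fin n → ℤ), latticeToQ n x ∈ coneOf n ↑gens →
      latticeToQ n (w • x) ∈ coneOf n ↑gens)
    (χ : (Fin n → ℤ) → (Tsub →* k))      -- the characters of the torus `T_sub`
    (hχ : ∀ (x y : Fin n → ℤ) (t : Tsub), χ (x + y) t = χ x t * χ y t)
    (F : Subalgebra k (M → k))            -- the regular functions `k[M]`
    (hHopf : ∀ f ∈ F, ∃ (m : ℕ) (g h : Fin m → (M → k)),
      (∀ j, g j ∈ F ∧ h j ∈ F) ∧ ∀ x y : M, f (x * y) = ∑ j, g j x * h j y)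
    (R : Submodule k (Tsub → k))
    (hR : R = Submodule.span k
      {f | ∃ x : Fin n → ℤ, latticeToQ n x ∈ coneOf n ↑gens ∧ f = fun t => χ x t})
    (A : Set (M → k))
    (hA : A = {f | f ∈ F ∧ ∀ m₁ m₂ : M, (fun t : Tsub => f (m₁ * ↑t * m₂)) ∈ R}) :
    (∃ Aalg : Subalgebra k (M → k), ↑Aalg = A) ∧
    ∀ f ∈ A, ∃ (m : ℕ) (g h : Fin m → (M → k)),
      (∀ j, g j ∈ A ∧ h j ∈ A) ∧ ∀ x y : M, f (x * y) = ∑ j, g j x * h j y := by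
  -- notation for the generating set of `R`
  set S : Set (Tsub → k) :=
    {f | ∃ x : Fin n → ℤ, latticeToQ n x ∈ coneOf n ↑gens ∧ f = fun t => χ x t} with hS
  -- the trivial character is the constant function 1
  have hχ0 : ∀ t : Tsub, χ 0 t = 1 := by
    intro t
    have h1 : χ 0 t * χ 0 t⁻¹ = 1 := by
      rw [← map_mul, mul_inv_cancel, map_one]
    have hne : χ 0 t ≠ 0 := left_ne_zero_of_mul_eq_one h1
    have h2 : χ 0 t * 1 = χ 0 t * χ 0 t := by
      rw [mul_one]
      have := hχ 0 0 t
      simpa using this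
    exact (mul_left_cancel₀ hne h2).symm
  have hlat0 : latticeToQ n (0 : Fin n → ℤ) ∈ coneOf n ↑gens := by
    have : latticeToQ n (0 : Fin n → ℤ) = 0 := by funext i; simp [latticeToQ]
    rw [this]
    exact (coneOf n ↑gens).zero_mem
  have hRone : (fun _ : Tsub => (1 : k)) ∈ R := by
    rw [hR]
    apply Submodule.subset_span
    exact ⟨0, hlat0, by funext t; rw [hχ0 t]⟩
  -- `R` is closed under multiplication
  have hRmul : ∀ a ∈ R, ∀ b ∈ R, a * b ∈ R := by
    intro a ha b hb
    have hle : R * R ≤ R := by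
      rw [hR, Submodule.span_mul_span]
      apply Submodule.span_le.mpr
      rintro z hz
      obtain ⟨a, ha, b, hb, rfl⟩ := Set.mem_mul.mp hz
      obtain ⟨x, hx, rfl⟩ := ha
      obtain ⟨y, hy, rfl⟩ := hb
      apply Submodule.subset_span
      refine ⟨x + y, ?_, ?_⟩
      · have : latticeToQ n (x + y) = latticeToQ n x + latticeToQ n y := by
          funext i; simp [latticeToQ]
        rw [this]
        exact (coneOf n ↑gens).add_mem hx hy
      · funext t
        simp [hχ x y t]
    exact hle (Submodule.mul_mem_mul ha hb)
  -- `A` is a subalgebra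
  have hconst : ∀ c : k, (fun _ : M => c) ∈ A := by
    intro c
    rw [hA]
    refine ⟨?_, ?_⟩
    · have : (fun _ : M => c) = algebraMap k (M → k) c := rfl
      rw [this]; exact F.algebraMap_mem c
    · intro m₁ m₂
      have : (fun _ : Tsub => c) = c • (fun _ : Tsub => (1 : k)) := by
        funext t; simp
      exact this ▸ R.smul_mem c hRone
  have hAmul : ∀ a ∈ A, ∀ b ∈ A, a * b ∈ A := by
    intro a ha b hb
    rw [hA] at ha hb ⊢
    refine ⟨mul_mem ha.1 hb.1, fun m₁ m₂ => ?_⟩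
    exact hRmul _ (ha.2 m₁ m₂) _ (hb.2 m₁ m₂)
  have hAadd : ∀ a ∈ A, ∀ b ∈ A, a + b ∈ A := by
    intro a ha b hb
    rw [hA] at ha hb ⊢
    exact ⟨add_mem ha.1 hb.1, fun m₁ m₂ => R.add_mem (ha.2 m₁ m₂) (hb.2 m₁ m₂)⟩
  have hAsmul : ∀ (c : k), ∀ a ∈ A, c • a ∈ A := by
    intro c a ha
    rw [hA] at ha ⊢
    exact ⟨F.smul_mem ha.1 c, fun m₁ m₂ => R.smul_mem c (ha.2 m₁ m₂)⟩
  have hAzero : (0 : M → k) ∈ A := by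
    have : (0 : M → k) = fun _ : M => (0 : k) := rfl
    rw [this]; exact hconst 0
  have hAone : (1 : M → k) ∈ A := by
    have : (1 : M → k) = fun _ : M => (1 : k) := rfl
    rw [this]; exact hconst 1
  constructor
  · refine ⟨{ carrier := A
              mul_mem' := fun ha hb => hAmul _ ha _ hb
              one_mem' := hAone
              add_mem' := fun ha hb => hAadd _ ha _ hb
              zero_mem' := hAzero
              algebraMap_mem' := fun c => hconst c }, rfl⟩
  -- the coproduct part
  intro f hf
  have hfA := hf
  rw [hA] at hfA
  obtain ⟨m, g, h, hgh, hdec⟩ := hHopf f hfA.1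
  -- left translates of `f` are in `A`
  have hL : ∀ x : M, (fun y => f (x * y)) ∈ A := by
    intro x
    rw [hA]
    constructor
    · have : (fun y => f (x * y)) = ∑ j, g j x • h j := by
        funext y
        simp [hdec x y, Finset.sum_apply]
      rw [this]
      exact sum_mem fun j _ => F.smul_mem (hgh j).2 (g j x)
    · intro m₁ m₂
      have := hfA.2 (x * m₁) m₂
      simpa [mul_assoc] using this
  -- right translates of `f` are in `A`
  have hRt : ∀ y : M, (fun x => f (x * y)) ∈ A := by
    intro y
    rw [hA]
    constructor
    · have : (fun x => f (x * y)) = ∑ j, h j y • g j := by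
        funext x
        simp [hdec x y, Finset.sum_apply, mul_comm]
      rw [this]
      exact sum_mem fun j _ => F.smul_mem (hgh j).1 (h j y)
    · intro m₁ m₂
      have := hfA.2 m₁ (m₂ * y)
      simpa [mul_assoc] using this
  -- the span of the right translates of `f`
  set s : Set (M → k) := Set.range (fun y : M => fun x => f (x * y)) with hs
  obtain ⟨b, hbs, hbspan, hbind⟩ := exists_linearIndependent k s
  have hsg : s ⊆ ↑(Submodule.span k (Set.range g)) := by
    rintro _ ⟨y, rfl⟩
    show (fun x => f (x * y)) ∈ ↑(Submodule.span k (Set.range g))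
    have : (fun x => f (x * y)) = ∑ j, h j y • g j := by
      funext x
      simp [hdec x y, Finset.sum_apply, mul_comm]
    rw [this]
    exact sum_mem fun j _ => Submodule.smul_mem _ _ (Submodule.subset_span ⟨j, rfl⟩)
  haveI : Finite (Set.range g) := Set.finite_range g
  haveI hbfin : Finite ↥b :=
    hbind.finite_of_le_span_finite _ (Set.range g)
      (by rintro _ ⟨⟨v, hv⟩, rfl⟩; exact hsg (hbs hv))
  haveI : Fintype ↥b := Fintype.ofFinite ↥b
  set r : ℕ := Fintype.card ↥b with hr
  set e : ↥b ≃ Fin r := Fintype.equivFin ↥b with he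
  set u : Fin r → (M → k) := fun i => ((e.symm i : ↥b) : M → k) with hu
  have hu_ind : LinearIndependent k u := hbind.comp e.symm e.symm.injective
  have hu_range : Set.range u = b := by
    rw [hu]
    have : Set.range (fun i => ((e.symm i : ↥b) : M → k)) =
        Set.range ((↑) : ↥b → (M → k)) := e.symm.surjective.range_comp _
    rw [this, Subtype.range_coe]
  have hu_mem : ∀ i, u i ∈ A := by
    intro i
    have : u i ∈ s := hbs (by rw [← hu_range]; exact ⟨i, rfl⟩)
    obtain ⟨y, hy⟩ := this
    rw [← hy]
    exact hRt y
  -- for each `i`, a "coordinate function" built from left translates of `f`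
  have key : ∀ i : Fin r, ∃ bi : M → k, bi ∈ A ∧
      ∀ (c : Fin r → k) (y : M), ((fun x => f (x * y)) = ∑ i', c i' • u i') → bi y = c i := by
    intro i
    have hsingle : Pi.single i (1 : k) ∈
        Submodule.span k (Set.range (fun x : M => fun i' => u i' x)) := by
      rw [eval_span_top' u hu_ind]; trivial
    rw [Submodule.mem_span_set'] at hsingle
    obtain ⟨p, d, vs, hvs⟩ := hsingle
    choose xs hxs using fun j => (vs j).2
    refine ⟨fun y => ∑ j, d j * f (xs j * y), ?_, ?_⟩
    · have : (fun y => ∑ j, d j * f (xs j * y)) = ∑ j, d j • (fun y => f (xs j * y)) := by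
        funext y
        simp [Finset.sum_apply]
      rw [this]
      -- sums and scalar multiples of elements of `A` are in `A`
      classical
      induction (Finset.univ : Finset (Fin p)) using Finset.induction_on with
      | empty => simpa using hAzero
      | insert _ _ hx ih =>
          rw [Finset.sum_insert hx]
          exact hAadd _ (hAsmul _ _ (hL _)) _ ih
    · intro c y hc
      have hδ : ∀ i', ∑ j, d j * u i' (xs j) = (Pi.single i 1 : Fin r → k) i' := by
        intro i'
        have h1 := congrFun hvs i'
        simp only [Finset.sum_apply, Pi.smul_apply, smul_eq_mul] at h1
        rw [← h1]
        refine Finset.sum_congr rfl fun j _ => ?_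
        rw [← hxs j]
      have hval : ∀ j, f (xs j * y) = ∑ i', c i' * u i' (xs j) := by
        intro j
        have := congrFun hc (xs j)
        simpa [Finset.sum_apply] using this
      calc (∑ j, d j * f (xs j * y)) = ∑ j, ∑ i', d j * (c i' * u i' (xs j)) := by
            refine Finset.sum_congr rfl fun j _ => ?_
            rw [hval j, Finset.mul_sum]
        _ = ∑ i', c i' * ∑ j, d j * u i' (xs j) := by
            rw [Finset.sum_comm]
            refine Finset.sum_congr rfl fun i' _ => ?_
            rw [Finset.mul_sum]
            refine Finset.sum_congr rfl fun j _ => by ring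
        _ = ∑ i', c i' * (Pi.single i 1 : Fin r → k) i' := by
            refine Finset.sum_congr rfl fun i' _ => by rw [hδ i']
        _ = c i := by
            simp [Pi.single_apply, mul_ite]
  choose bfun hbA hbprop using key
  refine ⟨r, u, bfun, fun i => ⟨hu_mem i, hbA i⟩, ?_⟩
  intro x y
  have hy : (fun x => f (x * y)) ∈ Submodule.span k (Set.range u) := by
    rw [hu_range, hbspan]
    exact Submodule.subset_span ⟨y, rfl⟩
  rw [Submodule.mem_span_range_iff_exists_fun] at hy
  obtain ⟨c, hc⟩ := hy
  have hcc : (fun x => f (x * y)) = ∑ i', c i' • u i' := hc.symm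
  have hfx : f (x * y) = ∑ i', c i' * u i' x := by
    have := congrFun hcc x
    simpa [Finset.sum_apply] using this
  rw [hfx]
  refine Finset.sum_congr rfl fun i _ => ?_
  rw [hbprop i c y hcc, mul_comm]
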